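/- Let X be a measurable space with finite measure μ and let F be a bounded, equi-integrable family in L^1(X, μ). Then there exists a nondecreasing convex continuous function θ : [0,∞) → [0,∞] with θ(t)/t → ∞ as t → ∞ such that ∫_X θ(|f|) dμ ≤ 1 for all f ∈ F. -/

import Mathlib

open MeasureTheory ENNReal Filter

/-- De la Vallée-Poussin criterion: for a bounded equi-integrable family `F ⊂ L¹(X,μ)`
there is a nondecreasing convex continuous superlinear function `θ : [0,∞) → [0,∞)` with
`∫ θ(|f|) dμ ≤ 1` for all `f ∈ F`. -/
theorem stmt_6 {X : Type*} [MeasurableSpace X] (μ : Measure X) [IsFiniteMeasure μ]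
    (F : Set (X → ℝ)) (hmeas : ∀ f ∈ F, Measurable f)
    (hbdd : ∃ C : ℝ≥0∞, C < ⊤ ∧ ∀ f ∈ F, ∫⁻ x, ‖f x‖₊ ∂μ ≤ C)
    (hequi : ∀ ε : ℝ≥0∞, 0 < ε → ∃ δ : ℝ≥0∞, 0 < δ ∧ ∀ B : Set X, MeasurableSet B →
      μ B < δ → ∀ f ∈ F, ∫⁻ x in B, ‖f x‖₊ ∂μ < ε) :
    ∃ θ : ℝ → ℝ, (∀ t, 0 ≤ θ t) ∧ MonotoneOn θ (Set.Ici 0) ∧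
      ConvexOn ℝ (Set.Ici 0) θ ∧ ContinuousOn θ (Set.Ici 0) ∧
      Tendsto (fun t => θ t / t) atTop atTop ∧
      ∀ f ∈ F, ∫⁻ x, ENNReal.ofReal (θ |f x|) ∂μ ≤ 1 := by
  obtain ⟨C, hCtop, hCF⟩ := hbdd
  have hδ : ∀ n : ℕ, ∃ δ : ℝ≥0∞, 0 < δ ∧ ∀ B : Set X, MeasurableSet B →
      μ B < δ → ∀ f ∈ F, ∫⁻ x in B, ‖f x‖₊ ∂μ < (2⁻¹ : ℝ≥0∞) ^ (n + 1) := by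
    intro n
    exact hequi _ (ENNReal.pow_pos (by norm_num) _)
  choose δ hδpos hδF using hδ
  set a : ℕ → ℝ := fun n => max n ((C / δ n).toReal + 1) with ha
  have han : ∀ n : ℕ, (n : ℝ) ≤ a n := fun n => le_max_left _ _
  have ha1 : ∀ n : ℕ, (0 : ℝ) ≤ a n := by
    intro n
    refine le_trans ?_ (le_max_right _ _)
    positivity
  -- key estimate
  have hkey : ∀ n : ℕ, ∀ f ∈ F, ∫⁻ x in {x | a n < |f x|}, ‖f x‖₊ ∂μ
      < (2⁻¹ : ℝ≥0∞) ^ (n + 1) := by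
    intro n f hf
    have hfm := hmeas f hf
    have hBmeas : MeasurableSet {x | a n < |f x|} := measurableSet_lt measurable_const hfm.abs
    refine hδF n _ hBmeas ?_ f hf
    -- Markov inequality
    have hmarkov : ENNReal.ofReal (a n) * μ {x | a n < |f x|} ≤ C := by
      calc ENNReal.ofReal (a n) * μ {x | a n < |f x|}
          ≤ ENNReal.ofReal (a n) * μ {x | ENNReal.ofReal (a n) ≤ (‖f x‖₊ : ℝ≥0∞)} := by
            gcongr
            intro hx
            rw [show ((‖f x‖₊ : ℝ≥0∞)) = ENNReal.ofReal ‖f x‖ from (ofReal_norm _).symm,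
              Real.norm_eq_abs]
            exact ENNReal.ofReal_le_ofReal hx.le
        _ ≤ ∫⁻ x, ‖f x‖₊ ∂μ := mul_meas_ge_le_lintegral₀ hfm.nnnorm.coe_nnreal_ennreal.aemeasurable _
        _ ≤ C := hCF f hf
    by_contra hcon
    push_neg at hcon
    have hCd : C / δ n ≠ ⊤ := (ENNReal.div_lt_top hCtop.ne (hδpos n).ne').ne
    have h1 : C / δ n + 1 ≤ ENNReal.ofReal (a n) := by
      rw [← ENNReal.ofReal_toReal hCd, ← ENNReal.ofReal_one, ← ENNReal.ofReal_add
        ENNReal.toReal_nonneg zero_le_one]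
      exact ENNReal.ofReal_le_ofReal (le_max_right _ _)
    rcases eq_or_ne (δ n) ⊤ with hd | hd
    · exact absurd (hd ▸ hcon) (not_le.mpr (measure_lt_top μ _))
    · have heq : C + δ n = (C / δ n + 1) * δ n := by
        rw [add_mul, one_mul, ENNReal.div_mul_cancel (hδpos n).ne' hd]
      have hle2 : (C / δ n + 1) * δ n ≤ ENNReal.ofReal (a n) * μ {x | a n < |f x|} :=
        mul_le_mul' h1 hcon
      have this : C + δ n ≤ C := heq ▸ le_trans hle2 hmarkov
      have hle : C + δ n ≤ C + 0 := by simpa using this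
      exact absurd (le_antisymm ((ENNReal.add_le_add_iff_left hCtop.ne).mp hle)
        zero_le) (hδpos n).ne'
  -- the function
  set g : ℕ → ℝ → ℝ := fun n t => max (t - a n) 0 with hg
  have hg0 : ∀ n t, 0 ≤ g n t := fun n t => le_max_right _ _
  have hgzero : ∀ t : ℝ, ∀ n ∉ Finset.range ⌈t⌉₊, g n t = 0 := by
    intro t n hn
    simp only [Finset.mem_range, not_lt] at hn
    have : t ≤ a n := le_trans (le_trans (Nat.le_ceil t) (by exact_mod_cast hn)) (han n)
    simp [hg, max_eq_right, sub_nonpos.mpr this]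
  have hsum : ∀ t : ℝ, Summable (fun n => g n t) := fun t =>
    summable_of_ne_finset_zero (hgzero t)
  set θ : ℝ → ℝ := fun t => ∑' n, g n t with hθ
  have hθ0 : ∀ t, 0 ≤ θ t := fun t => tsum_nonneg (fun n => hg0 n t)
  have hθmono : Monotone θ := by
    intro s t hst
    exact Summable.tsum_le_tsum (fun n => max_le_max (by linarith) le_rfl) (hsum s) (hsum t)
  have hgconv : ∀ n, ConvexOn ℝ Set.univ (g n) := by
    intro n
    have h1 : ConvexOn ℝ Set.univ (fun t : ℝ => t - a n) :=
      (convexOn_id convex_univ).sub (concaveOn_const _ convex_univ)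
    exact h1.sup (convexOn_const 0 convex_univ)
  have hθconv : ConvexOn ℝ Set.univ θ := by
    refine ⟨convex_univ, fun x _ y _ p q hp hq hpq => ?_⟩
    have hterm : ∀ n, g n (p • x + q • y) ≤ p * g n x + q * g n y := fun n =>
      (hgconv n).2 (Set.mem_univ x) (Set.mem_univ y) hp hq hpq
    calc θ (p • x + q • y) ≤ ∑' n, (p * g n x + q * g n y) :=
          Summable.tsum_le_tsum hterm (hsum _) (((hsum x).mul_left p).add ((hsum y).mul_left q))
      _ = p * θ x + q * θ y := by
          rw [Summable.tsum_add ((hsum x).mul_left p) ((hsum y).mul_left q),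
            tsum_mul_left, tsum_mul_left]
      _ = p • θ x + q • θ y := rfl
  refine ⟨θ, hθ0, hθmono.monotoneOn _, hθconv.subset (Set.subset_univ _) (convex_Ici 0),
    ((hθconv.continuousOn isOpen_univ).mono (Set.subset_univ _)), ?_, ?_⟩
  · -- superlinearity
    rw [tendsto_atTop]
    intro M
    set N : ℕ := ⌈M⌉₊ + 1 with hN
    set S : ℝ := ∑ n ∈ Finset.range N, a n with hS
    have hS0 : 0 ≤ S := Finset.sum_nonneg fun n _ => ha1 n
    filter_upwards [eventually_ge_atTop (max 1 S)] with t ht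
    have ht1 : (1 : ℝ) ≤ t := le_trans (le_max_left _ _) ht
    have htS : S ≤ t := le_trans (le_max_right _ _) ht
    have ht0 : (0 : ℝ) < t := by linarith
    have hlow : (N : ℝ) * t - S ≤ θ t := by
      calc (N : ℝ) * t - S = ∑ n ∈ Finset.range N, (t - a n) := by
            rw [Finset.sum_sub_distrib, Finset.sum_const, Finset.card_range,
              nsmul_eq_mul, hS]
        _ ≤ ∑ n ∈ Finset.range N, g n t :=
            Finset.sum_le_sum fun n _ => le_max_left _ _
        _ ≤ θ t := Summable.sum_le_tsum _ (fun n _ => hg0 n t) (hsum t)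
    rw [le_div_iff₀ ht0]
    have hMN : M ≤ (N : ℝ) - 1 := by
      have := Nat.le_ceil M
      push_cast [hN]
      linarith
    have : M * t ≤ ((N : ℝ) - 1) * t := mul_le_mul_of_nonneg_right hMN ht0.le
    nlinarith
  · -- integral bound
    intro f hf
    have hfm := hmeas f hf
    have hpt : ∀ x, ENNReal.ofReal (θ |f x|)
        = ∑' n, ENNReal.ofReal (g n |f x|) := fun x =>
      ENNReal.ofReal_tsum_of_nonneg (fun n => hg0 n _) (hsum _)
    calc ∫⁻ x, ENNReal.ofReal (θ |f x|) ∂μ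
        = ∫⁻ x, ∑' n, ENNReal.ofReal (g n |f x|) ∂μ := lintegral_congr hpt
      _ = ∑' n, ∫⁻ x, ENNReal.ofReal (g n |f x|) ∂μ := by
          refine lintegral_tsum fun n => ?_
          exact (ENNReal.measurable_ofReal.comp
            ((hfm.abs.sub measurable_const).max measurable_const)).aemeasurable
      _ ≤ ∑' n : ℕ, (2⁻¹ : ℝ≥0∞) ^ (n + 1) := by
          refine Summable.tsum_le_tsum (fun n => ?_) ENNReal.summable ENNReal.summable
          have hBmeas : MeasurableSet {x | a n < |f x|} :=
            measurableSet_lt measurable_const hfm.abs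
          refine le_of_lt (lt_of_le_of_lt ?_ (hkey n f hf))
          rw [← lintegral_indicator hBmeas]
          refine lintegral_mono fun x => ?_
          by_cases hx : a n < |f x|
          · rw [Set.indicator_of_mem (show x ∈ {x | a n < |f x|} from hx)]
            rw [show ((‖f x‖₊ : ℝ≥0∞)) = ENNReal.ofReal ‖f x‖ from (ofReal_norm _).symm,
              Real.norm_eq_abs]
            refine ENNReal.ofReal_le_ofReal ?_
            have := ha1 n
            simp only [hg]
            rw [max_le_iff]
            constructor <;> linarith [abs_nonneg (f x)]
          · rw [Set.indicator_of_notMem (show x ∉ {x | a n < |f x|} from hx)]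
            push_neg at hx
            simp [hg, max_eq_right, sub_nonpos.mpr hx]
      _ = 1 := by
          have : ∀ n : ℕ, (2⁻¹ : ℝ≥0∞) ^ (n + 1) = (2⁻¹ : ℝ≥0∞) ^ n * 2⁻¹ :=
            fun n => pow_succ _ _
          simp_rw [this]
          rw [ENNReal.tsum_mul_right, ENNReal.tsum_geometric]
          rw [ENNReal.one_sub_inv_two, inv_inv,
            ENNReal.mul_inv_cancel (by norm_num) (by norm_num)]
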